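/- (Paraparticle realization of a Lie superalgebra.) Let L₀, L₁ be ℂ-vector spaces equipped with ℂ-bilinear maps ⟨·,·⟩₀₀ : L₀ × L₀ → L₀, ⟨·,·⟩₀₁ : L₀ × L₁ → L₁ and ⟨·,·⟩₁₁ : L₁ × L₁ → L₀ (the bracket of a Lie superalgebra L = L₀ ⊕ L₁ restricted to homogeneous components). Suppose given ℂ-linear maps 𝔞 : L₀ → Matrix (Fin m) (Fin m) ℂ, 𝔡 : L₀ → Matrix (Fin n) (Fin n) ℂ, 𝔟 : L₁ → Matrix (Fin m) (Fin n) ℂ, 𝔠 : L₁ → Matrix (Fin n) (Fin m) ℂ forming a graded matrix representation, i.e. for all x, x' ∈ L₀ and y, y' ∈ L₁: 𝔞⟨x,x'⟩₀₀ = 𝔞x·𝔞x' − 𝔞x'·𝔞x, 𝔡⟨x,x'⟩₀₀ = 𝔡x·𝔡x' − 𝔡x'·𝔡x, 𝔟⟨x,y⟩₀₁ = 𝔞x·𝔟y − 𝔟y·𝔡x, 𝔠⟨x,y⟩₀₁ = 𝔡x·𝔠y − 𝔠y·𝔞x, 𝔞⟨y,y'⟩₁₁ = 𝔟y·𝔠y'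 + 𝔟y'·𝔠y, 𝔡⟨y,y'⟩₁₁ = 𝔠y·𝔟y' + 𝔠y'·𝔟y. Let A be an associative unital ℂ-algebra containing parabosons B_k^± (k ∈ Fin m) and parafermions F_α^± (α ∈ Fin n) satisfying the relative parabose (Greenberg–Messiah) mixed relations, and define J₀ : L₀ → A by J₀(x) := (1/2)·Σ_{k,l} 𝔞(x)_{kl}·{B_k^+, B_l^−} + (1/2)·Σ_{α,β} 𝔡(x)_{αβ}·[F_α^+, F_β^−] and J₁ : L₁ → A by J₁(y) := (1/2)·Σ_{k,α} ( 𝔟(y)_{kα}·{B_k^+, F_α^−} + 𝔠(y)_{αk}·{F_α^+, B_k^−} ). Then for all x, x' ∈ L₀ and y, y' ∈ L₁: J₀(⟨x,x'⟩₀₀) = [J₀(x), J₀(x')], J₁(⟨x,y⟩₀₁) = [J₀(x), J₁(y)], and J₀(⟨y,y'⟩₁₁) = {J₁(y), J₁(y')}; i.e. J realizes the Lie superalgebra bracket via paraparticles. -/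

import Mathlib

open scoped BigOperators

noncomputable section

/-- The ringComm `[x, y] = x * y - y * x`. -/
def ringComm {A : Type*} [Ring A] (x y : A) : A := x * y - y * x

/-- The ringAnticomm `{x, y} = x * y + y * x`. -/
def ringAnticomm {A : Type*} [Ring A] (x y : A) : A := x * y + y * x

/-- A family of parabosons: `B k 1 = B_k^+`, `B k (-1) = B_k^-`, satisfying the
paraboson trilinear relations. -/
def IsParabosonFamily {A : Type*} [Ring A] [Algebra ℂ A] {ι : Type*} [DecidableEq ι]
    (B : ι → ℂ → A) : Prop :=
  ∀ (i j k : ι), ∀ ξ ∈ ({1, -1} : Set ℂ), ∀ η ∈ ({1, -1} : Set ℂ),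
    ∀ ε ∈ ({1, -1} : Set ℂ),
      ringComm (ringAnticomm (B i ξ) (B j η)) (B k ε) =
        ((ε - η) * (if j = k then (1 : ℂ) else 0)) • B i ξ +
          ((ε - ξ) * (if i = k then (1 : ℂ) else 0)) • B j η

/-- A family of parafermions: `F α 1 = F_α^+`, `F α (-1) = F_α^-`, satisfying the
parafermion trilinear relations. -/
def IsParafermionFamily {A : Type*} [Ring A] [Algebra ℂ A] {κ : Type*} [DecidableEq κ]
    (F : κ → ℂ → A) : Prop :=
  ∀ (i j k : κ), ∀ ξ ∈ ({1, -1} : Set ℂ), ∀ η ∈ ({1, -1} : Set ℂ),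
    ∀ ε ∈ ({1, -1} : Set ℂ),
      ringComm (ringComm (F i ξ) (F j η)) (F k ε) =
        ((1 / 2 : ℂ) * (ε - η) ^ 2 * (if j = k then (1 : ℂ) else 0)) • F i ξ -
          ((1 / 2 : ℂ) * (ε - ξ) ^ 2 * (if i = k then (1 : ℂ) else 0)) • F j η

/-- The relative parabose (Greenberg–Messiah) mixed trilinear relations between
a family of parabosons `B` and a family of parafermions `F`. -/
def RelParaboseMixed {A : Type*} [Ring A] [Algebra ℂ A] {ι κ : Type*} [DecidableEq ι] [DecidableEq κ]
    (B : ι → ℂ → A) (F : κ → ℂ → A) : Prop :=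
  ∀ (i j : ι) (α β : κ), ∀ ξ ∈ ({1, -1} : Set ℂ), ∀ η ∈ ({1, -1} : Set ℂ),
    ∀ ε ∈ ({1, -1} : Set ℂ),
      ringComm (ringAnticomm (B i ξ) (B j η)) (F α ε) = 0 ∧
      ringComm (ringComm (F α ξ) (F β η)) (B i ε) = 0 ∧
      ringComm (ringAnticomm (B i ξ) (F α η)) (B j ε) =
        ((ε - ξ) * (if i = j then (1 : ℂ) else 0)) • F α η ∧
      ringAnticomm (ringAnticomm (B i ξ) (F α η)) (F β ε) =
        ((1 / 2 : ℂ) * (ε - η) ^ 2 * (if α = β then (1 : ℂ) else 0)) • B i ξ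

/-- The even-part realization map `J(M,P)`. -/
def Jmap {A : Type*} [Ring A] [Algebra ℂ A] {m n : ℕ}
    (B : Fin m → ℂ → A) (F : Fin n → ℂ → A)
    (M : Matrix (Fin m) (Fin m) ℂ) (P : Matrix (Fin n) (Fin n) ℂ) : A :=
  (1 / 2 : ℂ) • ∑ k, ∑ l, M k l • ringAnticomm (B k 1) (B l (-1)) +
    (1 / 2 : ℂ) • ∑ α, ∑ β, P α β • ringComm (F α 1) (F β (-1))

/-- The odd-part realization map `K(Q,R)`. -/
def Kmap {A : Type*} [Ring A] [Algebra ℂ A] {m n : ℕ}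
    (B : Fin m → ℂ → A) (F : Fin n → ℂ → A)
    (Q : Matrix (Fin m) (Fin n) ℂ) (R : Matrix (Fin n) (Fin m) ℂ) : A :=
  (1 / 2 : ℂ) • ∑ k, ∑ α,
    (Q k α • ringAnticomm (B k 1) (F α (-1)) + R α k • ringAnticomm (F α 1) (B k (-1)))

set_option linter.unusedSectionVars false
set_option linter.unnecessarySeqFocus false
set_option linter.unreachableTactic false
set_option linter.unusedTactic false

section Aux
variable {A : Type*} [Ring A] [Algebra ℂ A]

lemma rc_add_left (x y z : A) : ringComm (x + y) z = ringComm x z + ringComm y z := by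
  simp only [ringComm]; noncomm_ring
lemma rc_add_right (x y z : A) : ringComm x (y + z) = ringComm x y + ringComm x z := by
  simp only [ringComm]; noncomm_ring
lemma rc_smul_left (c : ℂ) (x y : A) : ringComm (c • x) y = c • ringComm x y := by
  simp only [ringComm, smul_mul_assoc, mul_smul_comm, smul_sub]
lemma rc_smul_right (c : ℂ) (x y : A) : ringComm x (c • y) = c • ringComm x y := by
  simp only [ringComm, smul_mul_assoc, mul_smul_comm, smul_sub]
lemma rc_sum_left {ι : Type*} (s : Finset ι) (f : ι → A) (y : A) :
    ringComm (∑ i ∈ s, f i) y = ∑ i ∈ s, ringComm (f i) y := by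
  simp only [ringComm, Finset.sum_mul, Finset.mul_sum, Finset.sum_sub_distrib]
lemma rc_sum_right {ι : Type*} (s : Finset ι) (f : ι → A) (x : A) :
    ringComm x (∑ i ∈ s, f i) = ∑ i ∈ s, ringComm x (f i) := by
  simp only [ringComm, Finset.sum_mul, Finset.mul_sum, Finset.sum_sub_distrib]
lemma ra_add_left (x y z : A) : ringAnticomm (x + y) z = ringAnticomm x z + ringAnticomm y z := by
  simp only [ringAnticomm]; noncomm_ring
lemma ra_add_right (x y z : A) : ringAnticomm x (y + z) = ringAnticomm x y + ringAnticomm x z := by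
  simp only [ringAnticomm]; noncomm_ring
lemma ra_smul_left (c : ℂ) (x y : A) : ringAnticomm (c • x) y = c • ringAnticomm x y := by
  simp only [ringAnticomm, smul_mul_assoc, mul_smul_comm, smul_add]
lemma ra_smul_right (c : ℂ) (x y : A) : ringAnticomm x (c • y) = c • ringAnticomm x y := by
  simp only [ringAnticomm, smul_mul_assoc, mul_smul_comm, smul_add]
lemma ra_sum_left {ι : Type*} (s : Finset ι) (f : ι → A) (y : A) :
    ringAnticomm (∑ i ∈ s, f i) y = ∑ i ∈ s, ringAnticomm (f i) y := by
  simp only [ringAnticomm, Finset.sum_mul, Finset.mul_sum, Finset.sum_add_distrib]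
lemma ra_sum_right {ι : Type*} (s : Finset ι) (f : ι → A) (x : A) :
    ringAnticomm x (∑ i ∈ s, f i) = ∑ i ∈ s, ringAnticomm x (f i) := by
  simp only [ringAnticomm, Finset.sum_mul, Finset.mul_sum, Finset.sum_add_distrib]
lemma ra_comm (x y : A) : ringAnticomm x y = ringAnticomm y x := by
  simp only [ringAnticomm]; abel
lemma rc_mul_right (x y z : A) : ringComm x (y * z) = ringComm x y * z + y * ringComm x z := by
  simp only [ringComm]; noncomm_ring
lemma ra_mul_right₁ (x y z : A) : ringAnticomm x (y * z) = ringComm x y * z + y * ringAnticomm x z := by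
  simp only [ringComm, ringAnticomm]; noncomm_ring
lemma ra_mul_right₂ (x y z : A) : ringAnticomm x (y * z) = ringAnticomm x y * z - y * ringComm x z := by
  simp only [ringComm, ringAnticomm]; noncomm_ring
lemma rc_sub_right (x y z : A) : ringComm x (y - z) = ringComm x y - ringComm x z := by
  simp only [ringComm]; noncomm_ring
end Aux

section Tri
variable {A : Type*} [Ring A] [Algebra ℂ A] {ι κ : Type*} [DecidableEq ι] [DecidableEq κ]
variable {B : ι → ℂ → A} {F : κ → ℂ → A}

lemma memP : (1:ℂ) ∈ ({1, -1} : Set ℂ) := by norm_num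
lemma memM : (-1:ℂ) ∈ ({1, -1} : Set ℂ) := by norm_num

lemma cBB_Bp (hB : IsParabosonFamily B) (i j k : ι) :
    ringComm (ringAnticomm (B i 1) (B j (-1))) (B k 1)
      = if j = k then (2:ℂ) • B i 1 else 0 := by
  have h := hB i j k 1 memP (-1) memM 1 memP
  rw [h]; split_ifs <;> simp <;> norm_num
lemma cBB_Bm (hB : IsParabosonFamily B) (i j k : ι) :
    ringComm (ringAnticomm (B i 1) (B j (-1))) (B k (-1))
      = if i = k then (-2:ℂ) • B j (-1) else 0 := by
  have h := hB i j k 1 memP (-1) memM (-1) memM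
  rw [h]; split_ifs <;> simp <;> norm_num
lemma cFF_Fp (hF : IsParafermionFamily F) (a b c : κ) :
    ringComm (ringComm (F a 1) (F b (-1))) (F c 1)
      = if b = c then (2:ℂ) • F a 1 else 0 := by
  have h := hF a b c 1 memP (-1) memM 1 memP
  rw [h]; split_ifs <;> simp <;> norm_num
lemma cFF_Fm (hF : IsParafermionFamily F) (a b c : κ) :
    ringComm (ringComm (F a 1) (F b (-1))) (F c (-1))
      = if a = c then (-2:ℂ) • F b (-1) else 0 := by
  have h := hF a b c 1 memP (-1) memM (-1) memM
  rw [h]; split_ifs <;> simp <;> norm_num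
end Tri

section Tri2
variable {A : Type*} [Ring A] [Algebra ℂ A] {ι κ : Type*} [DecidableEq ι] [DecidableEq κ]
variable {B : ι → ℂ → A} {F : κ → ℂ → A}

lemma cBB_F (hBF : RelParaboseMixed B F) (i j : ι) (a : κ) {ε : ℂ} (hε : ε ∈ ({1,-1}:Set ℂ)) :
    ringComm (ringAnticomm (B i 1) (B j (-1))) (F a ε) = 0 :=
  (hBF i j a a 1 memP (-1) memM ε hε).1
lemma cFF_B (hBF : RelParaboseMixed B F) (a b : κ) (k : ι) {ε : ℂ} (hε : ε ∈ ({1,-1}:Set ℂ)) :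
    ringComm (ringComm (F a 1) (F b (-1))) (B k ε) = 0 :=
  (hBF k k a b 1 memP (-1) memM ε hε).2.1
lemma cBF_Bp (hBF : RelParaboseMixed B F) (k : ι) (a : κ) (l : ι) :
    ringComm (ringAnticomm (B k 1) (F a (-1))) (B l 1) = 0 := by
  have h := (hBF k l a a 1 memP (-1) memM 1 memP).2.2.1
  rw [h]; norm_num
lemma cBF_Bm (hBF : RelParaboseMixed B F) (k : ι) (a : κ) (l : ι) :
    ringComm (ringAnticomm (B k 1) (F a (-1))) (B l (-1))
      = if k = l then (-2:ℂ) • F a (-1) else 0 := by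
  have h := (hBF k l a a 1 memP (-1) memM (-1) memM).2.2.1
  rw [h]; split_ifs <;> simp <;> norm_num
lemma cBF_Fp (hBF : RelParaboseMixed B F) (k : ι) (a b : κ) :
    ringAnticomm (ringAnticomm (B k 1) (F a (-1))) (F b 1)
      = if a = b then (2:ℂ) • B k 1 else 0 := by
  have h := (hBF k k a b 1 memP (-1) memM 1 memP).2.2.2
  rw [h]; split_ifs <;> simp <;> norm_num
lemma cBF_Fm (hBF : RelParaboseMixed B F) (k : ι) (a b : κ) :
    ringAnticomm (ringAnticomm (B k 1) (F a (-1))) (F b (-1)) = 0 := by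
  have h := (hBF k k a b 1 memP (-1) memM (-1) memM).2.2.2
  rw [h]; norm_num
lemma cFB_Bp (hBF : RelParaboseMixed B F) (a : κ) (k l : ι) :
    ringComm (ringAnticomm (F a 1) (B k (-1))) (B l 1)
      = if k = l then (2:ℂ) • F a 1 else 0 := by
  rw [ra_comm]
  have h := (hBF k l a a (-1) memM 1 memP 1 memP).2.2.1
  rw [h]; split_ifs <;> simp <;> norm_num
lemma cFB_Bm (hBF : RelParaboseMixed B F) (a : κ) (k l : ι) :
    ringComm (ringAnticomm (F a 1) (B k (-1))) (B l (-1)) = 0 := by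
  rw [ra_comm]
  have h := (hBF k l a a (-1) memM 1 memP (-1) memM).2.2.1
  rw [h]; norm_num
lemma cFB_Fp (hBF : RelParaboseMixed B F) (a : κ) (k : ι) (b : κ) :
    ringAnticomm (ringAnticomm (F a 1) (B k (-1))) (F b 1) = 0 := by
  rw [ra_comm (F a 1)]
  have h := (hBF k k a b (-1) memM 1 memP 1 memP).2.2.2
  rw [h]; norm_num
lemma cFB_Fm (hBF : RelParaboseMixed B F) (a : κ) (k : ι) (b : κ) :
    ringAnticomm (ringAnticomm (F a 1) (B k (-1))) (F b (-1))
      = if a = b then (2:ℂ) • B k (-1) else 0 := by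
  rw [ra_comm (F a 1)]
  have h := (hBF k k a b (-1) memM 1 memP (-1) memM).2.2.2
  rw [h]; split_ifs <;> simp <;> norm_num
end Tri2


section Bil
set_option linter.unnecessarySeqFocus false
variable {A : Type*} [Ring A] [Algebra ℂ A] {ι κ : Type*} [DecidableEq ι] [DecidableEq κ]
variable {B : ι → ℂ → A} {F : κ → ℂ → A}

lemma LBBBB (hB : IsParabosonFamily B) (i j k l : ι) :
    ringComm (ringAnticomm (B i 1) (B j (-1))) (ringAnticomm (B k 1) (B l (-1)))
      = (if j = k then (2:ℂ) • ringAnticomm (B i 1) (B l (-1)) else 0)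
        - (if i = l then (2:ℂ) • ringAnticomm (B k 1) (B j (-1)) else 0) := by
  rw [show ringAnticomm (B k 1) (B l (-1)) = B k 1 * B l (-1) + B l (-1) * B k 1 from rfl,
    rc_add_right, rc_mul_right, rc_mul_right, cBB_Bp hB, cBB_Bm hB]
  split_ifs <;>
    simp only [zero_mul, mul_zero, smul_mul_assoc, mul_smul_comm, ringAnticomm, ringComm,
      add_zero, zero_add, sub_zero, zero_sub, smul_add, smul_sub] <;>
    module

lemma LFFFF (hF : IsParafermionFamily F) (a b c d : κ) :
    ringComm (ringComm (F a 1) (F b (-1))) (ringComm (F c 1) (F d (-1)))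
      = (if b = c then (2:ℂ) • ringComm (F a 1) (F d (-1)) else 0)
        - (if a = d then (2:ℂ) • ringComm (F c 1) (F b (-1)) else 0) := by
  rw [show ringComm (F c 1) (F d (-1)) = F c 1 * F d (-1) - F d (-1) * F c 1 from rfl,
    rc_sub_right, rc_mul_right, rc_mul_right, cFF_Fp hF, cFF_Fm hF]
  split_ifs <;>
    simp only [zero_mul, mul_zero, smul_mul_assoc, mul_smul_comm, ringAnticomm, ringComm,
      add_zero, zero_add, sub_zero, zero_sub, smul_add, smul_sub] <;>
    module

lemma LBBFF (hBF : RelParaboseMixed B F) (i j : ι) (a b : κ) :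
    ringComm (ringAnticomm (B i 1) (B j (-1))) (ringComm (F a 1) (F b (-1))) = 0 := by
  rw [show ringComm (F a 1) (F b (-1)) = F a 1 * F b (-1) - F b (-1) * F a 1 from rfl,
    rc_sub_right, rc_mul_right, rc_mul_right, cBB_F hBF i j a memP, cBB_F hBF i j b memM]
  simp

lemma LFFBB (hBF : RelParaboseMixed B F) (a b : κ) (k l : ι) :
    ringComm (ringComm (F a 1) (F b (-1))) (ringAnticomm (B k 1) (B l (-1))) = 0 := by
  rw [show ringAnticomm (B k 1) (B l (-1)) = B k 1 * B l (-1) + B l (-1) * B k 1 from rfl,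
    rc_add_right, rc_mul_right, rc_mul_right, cFF_B hBF a b k memP, cFF_B hBF a b l memM]
  simp

lemma LBBBF (hB : IsParabosonFamily B) (hBF : RelParaboseMixed B F) (i j k : ι) (a : κ) :
    ringComm (ringAnticomm (B i 1) (B j (-1))) (ringAnticomm (B k 1) (F a (-1)))
      = if j = k then (2:ℂ) • ringAnticomm (B i 1) (F a (-1)) else 0 := by
  rw [show ringAnticomm (B k 1) (F a (-1)) = B k 1 * F a (-1) + F a (-1) * B k 1 from rfl,
    rc_add_right, rc_mul_right, rc_mul_right, cBB_Bp hB, cBB_F hBF i j a memM]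
  split_ifs <;>
    simp only [zero_mul, mul_zero, smul_mul_assoc, mul_smul_comm, ringAnticomm, ringComm,
      add_zero, zero_add, sub_zero, zero_sub, smul_add, smul_sub] <;>
    module

lemma LBBFB (hB : IsParabosonFamily B) (hBF : RelParaboseMixed B F) (i j : ι) (a : κ) (k : ι) :
    ringComm (ringAnticomm (B i 1) (B j (-1))) (ringAnticomm (F a 1) (B k (-1)))
      = if i = k then (-2:ℂ) • ringAnticomm (F a 1) (B j (-1)) else 0 := by
  rw [show ringAnticomm (F a 1) (B k (-1)) = F a 1 * B k (-1) + B k (-1) * F a 1 from rfl,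
    rc_add_right, rc_mul_right, rc_mul_right, cBB_Bm hB, cBB_F hBF i j a memP]
  split_ifs <;>
    simp only [zero_mul, mul_zero, smul_mul_assoc, mul_smul_comm, ringAnticomm, ringComm,
      add_zero, zero_add, sub_zero, zero_sub, smul_add, smul_sub] <;>
    module

lemma LFFBF (hF : IsParafermionFamily F) (hBF : RelParaboseMixed B F) (a b : κ) (k : ι) (c : κ) :
    ringComm (ringComm (F a 1) (F b (-1))) (ringAnticomm (B k 1) (F c (-1)))
      = if a = c then (-2:ℂ) • ringAnticomm (B k 1) (F b (-1)) else 0 := by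
  rw [show ringAnticomm (B k 1) (F c (-1)) = B k 1 * F c (-1) + F c (-1) * B k 1 from rfl,
    rc_add_right, rc_mul_right, rc_mul_right, cFF_Fm hF, cFF_B hBF a b k memP]
  split_ifs <;>
    simp only [zero_mul, mul_zero, smul_mul_assoc, mul_smul_comm, ringAnticomm, ringComm,
      add_zero, zero_add, sub_zero, zero_sub, smul_add, smul_sub] <;>
    module

lemma LFFFB (hF : IsParafermionFamily F) (hBF : RelParaboseMixed B F) (a b c : κ) (k : ι) :
    ringComm (ringComm (F a 1) (F b (-1))) (ringAnticomm (F c 1) (B k (-1)))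
      = if b = c then (2:ℂ) • ringAnticomm (F a 1) (B k (-1)) else 0 := by
  rw [show ringAnticomm (F c 1) (B k (-1)) = F c 1 * B k (-1) + B k (-1) * F c 1 from rfl,
    rc_add_right, rc_mul_right, rc_mul_right, cFF_Fp hF, cFF_B hBF a b k memM]
  split_ifs <;>
    simp only [zero_mul, mul_zero, smul_mul_assoc, mul_smul_comm, ringAnticomm, ringComm,
      add_zero, zero_add, sub_zero, zero_sub, smul_add, smul_sub] <;>
    module

lemma LBFBF (hBF : RelParaboseMixed B F) (k : ι) (a : κ) (l : ι) (b : κ) :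
    ringAnticomm (ringAnticomm (B k 1) (F a (-1))) (ringAnticomm (B l 1) (F b (-1))) = 0 := by
  rw [show ringAnticomm (B l 1) (F b (-1)) = B l 1 * F b (-1) + F b (-1) * B l 1 from rfl,
    ra_add_right, ra_mul_right₁, ra_mul_right₂, cBF_Bp hBF, cBF_Fm hBF]
  simp

lemma LFBFB (hBF : RelParaboseMixed B F) (a : κ) (k : ι) (b : κ) (l : ι) :
    ringAnticomm (ringAnticomm (F a 1) (B k (-1))) (ringAnticomm (F b 1) (B l (-1))) = 0 := by
  rw [show ringAnticomm (F b 1) (B l (-1)) = F b 1 * B l (-1) + B l (-1) * F b 1 from rfl,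
    ra_add_right, ra_mul_right₂, ra_mul_right₁, cFB_Fp hBF, cFB_Bm hBF]
  simp

lemma LBFFB (hBF : RelParaboseMixed B F) (k : ι) (a b : κ) (l : ι) :
    ringAnticomm (ringAnticomm (B k 1) (F a (-1))) (ringAnticomm (F b 1) (B l (-1)))
      = (if a = b then (2:ℂ) • ringAnticomm (B k 1) (B l (-1)) else 0)
        + (if k = l then (2:ℂ) • ringComm (F b 1) (F a (-1)) else 0) := by
  rw [show ringAnticomm (F b 1) (B l (-1)) = F b 1 * B l (-1) + B l (-1) * F b 1 from rfl,
    ra_add_right, ra_mul_right₂, ra_mul_right₁, cBF_Fp hBF, cBF_Bm hBF]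
  split_ifs <;>
    simp only [zero_mul, mul_zero, smul_mul_assoc, mul_smul_comm, ringAnticomm, ringComm,
      add_zero, zero_add, sub_zero, zero_sub, smul_add, smul_sub] <;>
    module

lemma LFBBF (hBF : RelParaboseMixed B F) (a : κ) (k l : ι) (b : κ) :
    ringAnticomm (ringAnticomm (F a 1) (B k (-1))) (ringAnticomm (B l 1) (F b (-1)))
      = (if a = b then (2:ℂ) • ringAnticomm (B l 1) (B k (-1)) else 0)
        + (if k = l then (2:ℂ) • ringComm (F a 1) (F b (-1)) else 0) := by
  rw [show ringAnticomm (B l 1) (F b (-1)) = B l 1 * F b (-1) + F b (-1) * B l 1 from rfl,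
    ra_add_right, ra_mul_right₁, ra_mul_right₂, cFB_Bp hBF, cFB_Fm hBF]
  split_ifs <;>
    simp only [zero_mul, mul_zero, smul_mul_assoc, mul_smul_comm, ringAnticomm, ringComm,
      add_zero, zero_add, sub_zero, zero_sub, smul_add, smul_sub] <;>
    module
end Bil


section Collapse
variable {A : Type*} [AddCommMonoid A] [Module ℂ A]

lemma collapse₁ {ι κ μ : Type*} [Fintype ι] [Fintype κ] [Fintype μ] [DecidableEq κ]
    (f : ι → κ → ℂ) (g : κ → μ → ℂ) (X : ι → μ → A) (c : ℂ) :
    ∑ i, ∑ j, ∑ k, ∑ l, (f i j * g k l) • (if j = k then c • X i l else 0)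
      = ∑ i, ∑ l, (c * ∑ j, f i j * g j l) • X i l := by
  have h1 : ∀ i j k l, (f i j * g k l) • (if j = k then c • X i l else 0)
      = if j = k then (c * (f i j * g j l)) • X i l else 0 := by
    intro i j k l
    split_ifs with h
    · subst h; rw [smul_smul]; congr 1; ring
    · simp
  simp only [h1]
  refine Finset.sum_congr rfl fun i _ => ?_
  rw [show (∑ j, ∑ k, ∑ l, if j = k then (c * (f i j * g j l)) • X i l else 0)
      = ∑ j, ∑ l, ∑ k, (if j = k then (c * (f i j * g j l)) • X i l else 0) from
    Finset.sum_congr rfl fun j _ => Finset.sum_comm]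
  simp only [Finset.sum_ite_eq, Finset.mem_univ, if_true]
  rw [Finset.sum_comm]
  exact Finset.sum_congr rfl fun l _ => by rw [Finset.mul_sum, Finset.sum_smul]

lemma collapse₂ {ι κ μ : Type*} [Fintype ι] [Fintype κ] [Fintype μ] [DecidableEq ι]
    (f : ι → κ → ℂ) (g : μ → ι → ℂ) (X : μ → κ → A) (c : ℂ) :
    ∑ i, ∑ j, ∑ k, ∑ l, (f i j * g k l) • (if i = l then c • X k j else 0)
      = ∑ k, ∑ j, (c * ∑ i, g k i * f i j) • X k j := by
  have h1 : ∀ i j k l, (f i j * g k l) • (if i = l then c • X k j else 0)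
      = if i = l then (c * (g k i * f i j)) • X k j else 0 := by
    intro i j k l
    split_ifs with h
    · subst h; rw [smul_smul]; congr 1; ring
    · simp
  simp only [h1, Finset.sum_ite_eq, Finset.mem_univ, if_true]
  rw [show (∑ i, ∑ j, ∑ k, (c * (g k i * f i j)) • X k j)
      = ∑ i, ∑ k, ∑ j, (c * (g k i * f i j)) • X k j from
    Finset.sum_congr rfl fun i _ => Finset.sum_comm]
  rw [Finset.sum_comm]
  refine Finset.sum_congr rfl fun k _ => ?_
  rw [Finset.sum_comm]
  exact Finset.sum_congr rfl fun j _ => by rw [Finset.mul_sum, Finset.sum_smul]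

end Collapse


section Sums
variable {A : Type*} [Ring A] [Algebra ℂ A] {m n : ℕ}

def sB (B : Fin m → ℂ → A) (M : Matrix (Fin m) (Fin m) ℂ) : A :=
  ∑ i, ∑ j, M i j • ringAnticomm (B i 1) (B j (-1))
def sF (F : Fin n → ℂ → A) (P : Matrix (Fin n) (Fin n) ℂ) : A :=
  ∑ a, ∑ b, P a b • ringComm (F a 1) (F b (-1))
def sBF (B : Fin m → ℂ → A) (F : Fin n → ℂ → A) (Q : Matrix (Fin m) (Fin n) ℂ) : A :=
  ∑ k, ∑ a, Q k a • ringAnticomm (B k 1) (F a (-1))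
def sFB (B : Fin m → ℂ → A) (F : Fin n → ℂ → A) (R : Matrix (Fin n) (Fin m) ℂ) : A :=
  ∑ a, ∑ k, R a k • ringAnticomm (F a 1) (B k (-1))

variable {B : Fin m → ℂ → A} {F : Fin n → ℂ → A}

lemma c_sB_sB (hB : IsParabosonFamily B) (a a' : Matrix (Fin m) (Fin m) ℂ) :
    ringComm (sB B a) (sB B a') = (2:ℂ) • sB B (a * a' - a' * a) := by
  simp only [sB, rc_sum_left, rc_smul_left]
  simp only [rc_sum_right, rc_smul_right]
  simp only [Finset.smul_sum, smul_smul]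
  simp only [LBBBB hB, smul_sub, Finset.sum_sub_distrib]
  rw [collapse₁ (f := a) (g := a'), collapse₂ (f := a) (g := a')]
  simp only [Finset.smul_sum, smul_smul, Matrix.sub_apply, Matrix.mul_apply, mul_sub,
    sub_smul, Finset.sum_sub_distrib]
end Sums


section Sums2
variable {A : Type*} [Ring A] [Algebra ℂ A] {m n : ℕ}
variable {B : Fin m → ℂ → A} {F : Fin n → ℂ → A}

lemma c_sF_sF (hF : IsParafermionFamily F) (d d' : Matrix (Fin n) (Fin n) ℂ) :
    ringComm (sF F d) (sF F d') = (2:ℂ) • sF F (d * d' - d' * d) := by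
  simp only [sF, rc_sum_left, rc_smul_left]
  simp only [rc_sum_right, rc_smul_right]
  simp only [Finset.smul_sum, smul_smul]
  simp only [LFFFF hF, smul_sub, Finset.sum_sub_distrib]
  rw [collapse₁ (f := d) (g := d'), collapse₂ (f := d) (g := d')]
  simp only [Finset.smul_sum, smul_smul, Matrix.sub_apply, Matrix.mul_apply, mul_sub,
    sub_smul, Finset.sum_sub_distrib]

lemma c_sB_sF (hBF : RelParaboseMixed B F) (a : Matrix (Fin m) (Fin m) ℂ)
    (d : Matrix (Fin n) (Fin n) ℂ) : ringComm (sB B a) (sF F d) = 0 := by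
  simp only [sB, sF, rc_sum_left, rc_smul_left]
  simp only [rc_sum_right, rc_smul_right]
  simp only [LBBFF hBF, smul_zero, Finset.sum_const_zero]

lemma c_sF_sB (hBF : RelParaboseMixed B F) (d : Matrix (Fin n) (Fin n) ℂ)
    (a : Matrix (Fin m) (Fin m) ℂ) : ringComm (sF F d) (sB B a) = 0 := by
  simp only [sB, sF, rc_sum_left, rc_smul_left]
  simp only [rc_sum_right, rc_smul_right]
  simp only [LFFBB hBF, smul_zero, Finset.sum_const_zero]

lemma c_sB_sBF (hB : IsParabosonFamily B) (hBF : RelParaboseMixed B F)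
    (a : Matrix (Fin m) (Fin m) ℂ) (q : Matrix (Fin m) (Fin n) ℂ) :
    ringComm (sB B a) (sBF B F q) = (2:ℂ) • sBF B F (a * q) := by
  simp only [sB, sBF, rc_sum_left, rc_smul_left]
  simp only [rc_sum_right, rc_smul_right]
  simp only [Finset.smul_sum, smul_smul]
  simp only [LBBBF hB hBF]
  rw [collapse₁ (f := a) (g := q)]
  simp only [Finset.smul_sum, smul_smul, Matrix.mul_apply]

lemma c_sB_sFB (hB : IsParabosonFamily B) (hBF : RelParaboseMixed B F)
    (a : Matrix (Fin m) (Fin m) ℂ) (r : Matrix (Fin n) (Fin m) ℂ) :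
    ringComm (sB B a) (sFB B F r) = (-2:ℂ) • sFB B F (r * a) := by
  simp only [sB, sFB, rc_sum_left, rc_smul_left]
  simp only [rc_sum_right, rc_smul_right]
  simp only [Finset.smul_sum, smul_smul]
  simp only [LBBFB hB hBF]
  rw [collapse₂ (f := a) (g := r)]
  simp only [Finset.smul_sum, smul_smul, Matrix.mul_apply]

lemma c_sF_sBF (hF : IsParafermionFamily F) (hBF : RelParaboseMixed B F)
    (d : Matrix (Fin n) (Fin n) ℂ) (q : Matrix (Fin m) (Fin n) ℂ) :
    ringComm (sF F d) (sBF B F q) = (-2:ℂ) • sBF B F (q * d) := by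
  simp only [sF, sBF, rc_sum_left, rc_smul_left]
  simp only [rc_sum_right, rc_smul_right]
  simp only [Finset.smul_sum, smul_smul]
  simp only [LFFBF hF hBF]
  rw [collapse₂ (f := d) (g := q)]
  simp only [Finset.smul_sum, smul_smul, Matrix.mul_apply]

lemma c_sF_sFB (hF : IsParafermionFamily F) (hBF : RelParaboseMixed B F)
    (d : Matrix (Fin n) (Fin n) ℂ) (r : Matrix (Fin n) (Fin m) ℂ) :
    ringComm (sF F d) (sFB B F r) = (2:ℂ) • sFB B F (d * r) := by
  simp only [sF, sFB, rc_sum_left, rc_smul_left]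
  simp only [rc_sum_right, rc_smul_right]
  simp only [Finset.smul_sum, smul_smul]
  simp only [LFFFB hF hBF]
  rw [collapse₁ (f := d) (g := r)]
  simp only [Finset.smul_sum, smul_smul, Matrix.mul_apply]

lemma a_sBF_sBF (hBF : RelParaboseMixed B F) (q q' : Matrix (Fin m) (Fin n) ℂ) :
    ringAnticomm (sBF B F q) (sBF B F q') = 0 := by
  simp only [sBF, ra_sum_left, ra_smul_left]
  simp only [ra_sum_right, ra_smul_right]
  simp only [LBFBF hBF, smul_zero, Finset.sum_const_zero]

lemma a_sFB_sFB (hBF : RelParaboseMixed B F) (r r' : Matrix (Fin n) (Fin m) ℂ) :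
    ringAnticomm (sFB B F r) (sFB B F r') = 0 := by
  simp only [sFB, ra_sum_left, ra_smul_left]
  simp only [ra_sum_right, ra_smul_right]
  simp only [LFBFB hBF, smul_zero, Finset.sum_const_zero]

lemma a_sBF_sFB (hBF : RelParaboseMixed B F) (q : Matrix (Fin m) (Fin n) ℂ)
    (r' : Matrix (Fin n) (Fin m) ℂ) :
    ringAnticomm (sBF B F q) (sFB B F r')
      = (2:ℂ) • sB B (q * r') + (2:ℂ) • sF F (r' * q) := by
  simp only [sBF, sFB, ra_sum_left, ra_smul_left]
  simp only [ra_sum_right, ra_smul_right]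
  simp only [Finset.smul_sum, smul_smul]
  simp only [LBFFB hBF, smul_add, Finset.sum_add_distrib]
  rw [collapse₁ (f := q) (g := r'), collapse₂ (f := q) (g := r')]
  simp only [sB, sF, Finset.smul_sum, smul_smul, Matrix.mul_apply]

lemma a_sFB_sBF (hBF : RelParaboseMixed B F) (r : Matrix (Fin n) (Fin m) ℂ)
    (q' : Matrix (Fin m) (Fin n) ℂ) :
    ringAnticomm (sFB B F r) (sBF B F q')
      = (2:ℂ) • sB B (q' * r) + (2:ℂ) • sF F (r * q') := by
  simp only [sBF, sFB, ra_sum_left, ra_smul_left]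
  simp only [ra_sum_right, ra_smul_right]
  simp only [Finset.smul_sum, smul_smul]
  simp only [LFBBF hBF, smul_add, Finset.sum_add_distrib]
  rw [collapse₂ (f := r) (g := q'), collapse₁ (f := r) (g := q')]
  simp only [sB, sF, Finset.smul_sum, smul_smul, Matrix.mul_apply]

lemma sB_add (M N : Matrix (Fin m) (Fin m) ℂ) : sB B (M + N) = sB B M + sB B N := by
  simp only [sB, Matrix.add_apply, add_smul, Finset.sum_add_distrib]
lemma sF_add (M N : Matrix (Fin n) (Fin n) ℂ) : sF F (M + N) = sF F M + sF F N := by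
  simp only [sF, Matrix.add_apply, add_smul, Finset.sum_add_distrib]
lemma sBF_sub (M N : Matrix (Fin m) (Fin n) ℂ) :
    sBF B F (M - N) = sBF B F M - sBF B F N := by
  simp only [sBF, Matrix.sub_apply, sub_smul, Finset.sum_sub_distrib]
lemma sFB_sub (M N : Matrix (Fin n) (Fin m) ℂ) :
    sFB B F (M - N) = sFB B F M - sFB B F N := by
  simp only [sFB, Matrix.sub_apply, sub_smul, Finset.sum_sub_distrib]

end Sums2

section Core
variable {A : Type*} [Ring A] [Algebra ℂ A] {m n : ℕ}
variable {B : Fin m → ℂ → A} {F : Fin n → ℂ → A}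

lemma Jmap_eq (M : Matrix (Fin m) (Fin m) ℂ) (P : Matrix (Fin n) (Fin n) ℂ) :
    Jmap B F M P = (1 / 2 : ℂ) • sB B M + (1 / 2 : ℂ) • sF F P := rfl

lemma Kmap_eq (Q : Matrix (Fin m) (Fin n) ℂ) (R : Matrix (Fin n) (Fin m) ℂ) :
    Kmap B F Q R = (1 / 2 : ℂ) • (sBF B F Q + sFB B F R) := by
  rw [Kmap, sBF, sFB]
  congr 1
  simp only [Finset.sum_add_distrib]
  congr 1
  exact Finset.sum_comm

lemma core₀₀ (hB : IsParabosonFamily B) (hF : IsParafermionFamily F)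
    (hBF : RelParaboseMixed B F) (a a' : Matrix (Fin m) (Fin m) ℂ)
    (d d' : Matrix (Fin n) (Fin n) ℂ) :
    ringComm (Jmap B F a d) (Jmap B F a' d')
      = Jmap B F (a * a' - a' * a) (d * d' - d' * d) := by
  rw [Jmap_eq, Jmap_eq, Jmap_eq]
  simp only [rc_add_left, rc_add_right, rc_smul_left, rc_smul_right, c_sB_sB hB, c_sF_sF hF, c_sB_sF hBF, c_sF_sB hBF,
    smul_zero, add_zero, zero_add, smul_smul]
  match_scalars <;> norm_num

lemma core₀₁ (hB : IsParabosonFamily B) (hF : IsParafermionFamily F)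
    (hBF : RelParaboseMixed B F) (a : Matrix (Fin m) (Fin m) ℂ)
    (d : Matrix (Fin n) (Fin n) ℂ) (q : Matrix (Fin m) (Fin n) ℂ)
    (r : Matrix (Fin n) (Fin m) ℂ) :
    ringComm (Jmap B F a d) (Kmap B F q r)
      = Kmap B F (a * q - q * d) (d * r - r * a) := by
  rw [Jmap_eq, Kmap_eq, Kmap_eq]
  simp only [rc_add_left, rc_add_right, rc_smul_left, rc_smul_right, c_sB_sBF hB hBF, c_sB_sFB hB hBF,
    c_sF_sBF hF hBF, c_sF_sFB hF hBF, smul_smul, sBF_sub, sFB_sub, smul_add, smul_sub]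
  match_scalars <;> norm_num

lemma core₁₁ (hBF : RelParaboseMixed B F)
    (q q' : Matrix (Fin m) (Fin n) ℂ) (r r' : Matrix (Fin n) (Fin m) ℂ) :
    ringAnticomm (Kmap B F q r) (Kmap B F q' r')
      = Jmap B F (q * r' + q' * r) (r * q' + r' * q) := by
  rw [Kmap_eq, Kmap_eq, Jmap_eq]
  simp only [ra_add_left, ra_add_right, ra_smul_left, ra_smul_right]
  simp only [a_sBF_sBF hBF, a_sFB_sFB hBF, a_sBF_sFB hBF, a_sFB_sBF hBF,
    zero_add, add_zero, sB_add, sF_add, smul_add, smul_smul]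
  match_scalars <;> norm_num

end Core

/-- Paraparticle realization of an arbitrary Lie superalgebra `L = L₀ ⊕ L₁`, given a
finite-dimensional graded matrix representation with blocks `𝔞, 𝔟, 𝔠, 𝔡`. -/
theorem paraparticle_realization_of_Lie_superalgebra
    {A : Type*} [Ring A] [Algebra ℂ A] {m n : ℕ}
    {L₀ L₁ : Type*} [AddCommGroup L₀] [Module ℂ L₀] [AddCommGroup L₁] [Module ℂ L₁]
    (br₀₀ : L₀ →ₗ[ℂ] L₀ →ₗ[ℂ] L₀) (br₀₁ : L₀ →ₗ[ℂ] L₁ →ₗ[ℂ] L₁)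
    (br₁₁ : L₁ →ₗ[ℂ] L₁ →ₗ[ℂ] L₀)
    (𝔞 : L₀ →ₗ[ℂ] Matrix (Fin m) (Fin m) ℂ) (𝔡 : L₀ →ₗ[ℂ] Matrix (Fin n) (Fin n) ℂ)
    (𝔟 : L₁ →ₗ[ℂ] Matrix (Fin m) (Fin n) ℂ) (𝔠 : L₁ →ₗ[ℂ] Matrix (Fin n) (Fin m) ℂ)
    (h𝔞 : ∀ x x' : L₀, 𝔞 (br₀₀ x x') = 𝔞 x * 𝔞 x' - 𝔞 x' * 𝔞 x)
    (h𝔡 : ∀ x x' : L₀, 𝔡 (br₀₀ x x') = 𝔡 x * 𝔡 x' - 𝔡 x' * 𝔡 x)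
    (h𝔟 : ∀ (x : L₀) (y : L₁), 𝔟 (br₀₁ x y) = 𝔞 x * 𝔟 y - 𝔟 y * 𝔡 x)
    (h𝔠 : ∀ (x : L₀) (y : L₁), 𝔠 (br₀₁ x y) = 𝔡 x * 𝔠 y - 𝔠 y * 𝔞 x)
    (h𝔞' : ∀ y y' : L₁, 𝔞 (br₁₁ y y') = 𝔟 y * 𝔠 y' + 𝔟 y' * 𝔠 y)
    (h𝔡' : ∀ y y' : L₁, 𝔡 (br₁₁ y y') = 𝔠 y * 𝔟 y' + 𝔠 y' * 𝔟 y)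
    (B : Fin m → ℂ → A) (F : Fin n → ℂ → A)
    (hB : IsParabosonFamily B) (hF : IsParafermionFamily F)
    (hBF : RelParaboseMixed B F)
    (J₀ : L₀ → A) (hJ₀ : ∀ x : L₀, J₀ x = Jmap B F (𝔞 x) (𝔡 x))
    (J₁ : L₁ → A) (hJ₁ : ∀ y : L₁, J₁ y = Kmap B F (𝔟 y) (𝔠 y)) :
    (∀ x x' : L₀, J₀ (br₀₀ x x') = ringComm (J₀ x) (J₀ x')) ∧
    (∀ (x : L₀) (y : L₁), J₁ (br₀₁ x y) = ringComm (J₀ x) (J₁ y)) ∧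
    (∀ y y' : L₁, J₀ (br₁₁ y y') = ringAnticomm (J₁ y) (J₁ y')) := by
  refine ⟨fun x x' => ?_, fun x y => ?_, fun y y' => ?_⟩
  · simp only [hJ₀, h𝔞, h𝔡]
    exact (core₀₀ hB hF hBF _ _ _ _).symm
  · simp only [hJ₀, hJ₁, h𝔟, h𝔠]
    exact (core₀₁ hB hF hBF _ _ _ _).symm
  · simp only [hJ₀, hJ₁, h𝔞', h𝔡']
    exact (core₁₁ hBF _ _ _ _).symm

end
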